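/- For every positive integer n, S_3(n) = n²·C(2n, n), where S_r(n) = ∑_{j=0}^{2n} C(2n, j)·|n−j|^r. -/
import Mathlib


/-- `S r n = ∑_{j=0}^{2n} C(2n, j) |n - j|^r`. -/
def S (r n : ℕ) : ℤ :=
  ∑ j ∈ Finset.range (2 * n + 1), (Nat.choose (2 * n) j : ℤ) * |(n : ℤ) - (j : ℤ)| ^ r

open Finset

lemma pascal_step (m : ℕ) (f : ℕ → ℤ) :
    ∑ j ∈ range (m+2), (Nat.choose (m+1) j : ℤ) * f j
    = ∑ j ∈ range (m+1), (Nat.choose m j : ℤ) * (f j + f (j+1)) := by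
  have hA : ∑ j ∈ range (m+1), (Nat.choose m j : ℤ) * f j
      = ∑ j ∈ range m, (Nat.choose m (j+1) : ℤ) * f (j+1) + f 0 := by
    rw [Finset.sum_range_succ']; simp
  have hB : ∑ j ∈ range (m+1), (Nat.choose m (j+1) : ℤ) * f (j+1)
      = ∑ j ∈ range m, (Nat.choose m (j+1) : ℤ) * f (j+1) := by
    rw [Finset.sum_range_succ]; simp [Nat.choose_eq_zero_of_lt]
  rw [Finset.sum_range_succ']
  simp only [Nat.choose_succ_succ, Nat.cast_add, add_mul, Nat.choose_zero_right,
    Nat.cast_one, one_mul]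
  rw [Finset.sum_add_distrib, hB]
  have : ∑ j ∈ range (m+1), (Nat.choose m j : ℤ) * (f j + f (j+1))
      = ∑ j ∈ range (m+1), (Nat.choose m j : ℤ) * f j
        + ∑ j ∈ range (m+1), (Nat.choose m j : ℤ) * f (j+1) := by
    rw [← Finset.sum_add_distrib]; exact Finset.sum_congr rfl fun j _ => by ring
  rw [this, hA]; ring

lemma abs_one_step (a : ℤ) :
    |a+1| + 2*|a| + |a-1| = 4*|a| + (if a = 0 then 2 else 0) := by
  rcases lt_trichotomy a 0 with h|h|h
  · rw [abs_of_nonpos (by omega : a + 1 ≤ 0), abs_of_nonpos h.le,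
      abs_of_nonpos (by omega : a - 1 ≤ 0), if_neg h.ne]
    ring
  · subst h; norm_num
  · rw [abs_of_nonneg (by omega : (0:ℤ) ≤ a+1), abs_of_nonneg h.le,
      abs_of_nonneg (by omega : (0:ℤ) ≤ a-1), if_neg h.ne']
    ring

lemma abs_cube_step (a : ℤ) :
    |a+1|^3 + 2*|a|^3 + |a-1|^3 = 4*|a|^3 + 6*|a| + (if a = 0 then 2 else 0) := by
  rcases lt_trichotomy a 0 with h|h|h
  · rw [abs_of_nonpos (by omega : a + 1 ≤ 0), abs_of_nonpos h.le,
      abs_of_nonpos (by omega : a - 1 ≤ 0), if_neg h.ne]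
    ring
  · subst h; norm_num
  · rw [abs_of_nonneg (by omega : (0:ℤ) ≤ a+1), abs_of_nonneg h.le,
      abs_of_nonneg (by omega : (0:ℤ) ≤ a-1), if_neg h.ne']
    ring

lemma double_step (m : ℕ) (f : ℕ → ℤ) :
    ∑ j ∈ range (2*(m+1)+1), (Nat.choose (2*(m+1)) j : ℤ) * f j
    = ∑ j ∈ range (2*m+1), (Nat.choose (2*m) j : ℤ) * (f j + 2 * f (j+1) + f (j+2)) := by
  have e1 : 2*(m+1)+1 = (2*m+1)+2 := by ring
  have e2 : 2*(m+1) = (2*m+1)+1 := by ring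
  rw [e1, e2, pascal_step (2*m+1) f]
  have e3 : 2*m+1+1 = (2*m)+2 := by ring
  rw [e3, pascal_step (2*m) (fun j => f j + f (j+1))]
  exact Finset.sum_congr rfl fun j _ => by ring

lemma key (n : ℕ) :
    S 1 n = (n : ℤ) * (Nat.choose (2*n) n : ℤ) ∧
    S 3 n = (n : ℤ)^2 * (Nat.choose (2*n) n : ℤ) := by
  induction n with
  | zero => simp [S]
  | succ m ih =>
    obtain ⟨ih1, ih3⟩ := ih
    have hcb : ((m:ℤ)+1) * (Nat.choose (2*(m+1)) (m+1) : ℤ)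
        = 2*(2*(m:ℤ)+1) * (Nat.choose (2*m) m : ℤ) := by
      have h := Nat.succ_mul_centralBinom_succ m
      have h2 : (m+1) * Nat.choose (2*(m+1)) (m+1) = 2 * (2*m+1) * Nat.choose (2*m) m := by
        simpa [Nat.centralBinom] using h
      exact_mod_cast congrArg (fun x : ℕ => (x : ℤ)) h2
    have hite : ∀ r : ℕ, ∑ j ∈ range (2*m+1),
        (Nat.choose (2*m) j : ℤ) * (if ((m:ℤ) - j) = 0 then (2:ℤ) else 0)
        = 2 * (Nat.choose (2*m) m : ℤ) := by
      intro r
      rw [Finset.sum_congr rfl (g := fun j => if j = m then 2 * (Nat.choose (2*m) j : ℤ) else 0)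
        (fun j _ => by
          by_cases hj : j = m
          · subst hj; simp; ring
          · have : ((m:ℤ) - j) ≠ 0 := by
              intro h; apply hj; omega
            simp [hj, this])]
      rw [Finset.sum_ite_eq' (range (2*m+1)) m (fun j => 2 * (Nat.choose (2*m) j : ℤ))]
      simp [Nat.lt_succ_iff]
      omega
    -- recurrence for S 1
    have rec1 : S 1 (m+1) = 4 * S 1 m + 2 * (Nat.choose (2*m) m : ℤ) := by
      have hs : S 1 (m+1)
          = ∑ j ∈ range (2*(m+1)+1), (Nat.choose (2*(m+1)) j : ℤ) * |((m:ℤ)+1) - j| ^ 1 := by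
        unfold S; simp only [Nat.cast_add, Nat.cast_one]
      rw [hs, double_step m (fun j => |((m:ℤ)+1) - j| ^ 1)]
      have hterm : ∀ j ∈ range (2*m+1),
          (Nat.choose (2*m) j : ℤ) *
            (|((m:ℤ)+1) - j|^1 + 2 * |((m:ℤ)+1) - (j+1:ℕ)|^1 + |((m:ℤ)+1) - (j+2:ℕ)|^1)
          = 4 * ((Nat.choose (2*m) j : ℤ) * |((m:ℤ) - j)|^1)
            + (Nat.choose (2*m) j : ℤ) * (if ((m:ℤ) - j) = 0 then (2:ℤ) else 0) := by
        intro j _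
        have h := abs_one_step ((m:ℤ) - j)
        push_cast
        have e1 : ((m:ℤ)+1) - j = ((m:ℤ) - j) + 1 := by ring
        have e2 : ((m:ℤ)+1) - (j+1) = ((m:ℤ) - j) := by ring
        have e3 : ((m:ℤ)+1) - (j+2) = ((m:ℤ) - j) - 1 := by ring
        rw [e1, e2, e3]
        simp only [pow_one] at *
        rw [show |((m:ℤ)-j)+1| + 2*|(m:ℤ)-j| + |((m:ℤ)-j)-1|
            = 4*|(m:ℤ)-j| + (if ((m:ℤ)-j) = 0 then (2:ℤ) else 0) from h]
        ring
      rw [Finset.sum_congr rfl hterm, Finset.sum_add_distrib, hite 1]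
      unfold S
      rw [← Finset.mul_sum]
    -- recurrence for S 3
    have rec3 : S 3 (m+1) = 4 * S 3 m + 6 * S 1 m + 2 * (Nat.choose (2*m) m : ℤ) := by
      have hs : S 3 (m+1)
          = ∑ j ∈ range (2*(m+1)+1), (Nat.choose (2*(m+1)) j : ℤ) * |((m:ℤ)+1) - j| ^ 3 := by
        unfold S; simp only [Nat.cast_add, Nat.cast_one]
      rw [hs, double_step m (fun j => |((m:ℤ)+1) - j| ^ 3)]
      have hterm : ∀ j ∈ range (2*m+1),
          (Nat.choose (2*m) j : ℤ) *
            (|((m:ℤ)+1) - j|^3 + 2 * |((m:ℤ)+1) - (j+1:ℕ)|^3 + |((m:ℤ)+1) - (j+2:ℕ)|^3)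
          = 4 * ((Nat.choose (2*m) j : ℤ) * |((m:ℤ) - j)|^3)
            + 6 * ((Nat.choose (2*m) j : ℤ) * |((m:ℤ) - j)|^1)
            + (Nat.choose (2*m) j : ℤ) * (if ((m:ℤ) - j) = 0 then (2:ℤ) else 0) := by
        intro j _
        have h := abs_cube_step ((m:ℤ) - j)
        push_cast
        have e1 : ((m:ℤ)+1) - j = ((m:ℤ) - j) + 1 := by ring
        have e2 : ((m:ℤ)+1) - (j+1) = ((m:ℤ) - j) := by ring
        have e3 : ((m:ℤ)+1) - (j+2) = ((m:ℤ) - j) - 1 := by ring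
        rw [e1, e2, e3, pow_one]
        rw [show |((m:ℤ)-j)+1|^3 + 2*|(m:ℤ)-j|^3 + |((m:ℤ)-j)-1|^3
            = 4*|(m:ℤ)-j|^3 + 6*|(m:ℤ)-j| + (if ((m:ℤ)-j) = 0 then (2:ℤ) else 0) from h]
        ring
      rw [Finset.sum_congr rfl hterm]
      rw [Finset.sum_add_distrib, Finset.sum_add_distrib, hite 3]
      unfold S
      rw [← Finset.mul_sum, ← Finset.mul_sum]
    constructor
    · rw [rec1, ih1]
      push_cast
      nlinarith [hcb]
    · rw [rec3, ih3, ih1]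
      push_cast
      nlinarith [hcb]

theorem stmt_4 :
    ∀ n : ℕ, 1 ≤ n → S 3 n = (n : ℤ) ^ 2 * (Nat.choose (2 * n) n : ℤ) := by
  intro n _
  exact (key n).2
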